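/- arXiv:1610.00374 — 3 statements merged into one kernel-verified Lean document; each statement's English description precedes it below -/
import Mathlib

section
/- For real numbers μ_1, ..., μ_n (n ≥ 2) with ∑ μ_i = 0, setting B = ∑ μ_i² and B_3 = ∑ μ_i³, one has |B_3| ≤ ((n-2)/√(n(n-1))) · B^{3/2}. -/
lemma aux_cube_bound (n : ℕ) (hn : 2 ≤ n) (μ : Fin n → ℝ) (hsum : ∑ i, μ i = 0) :
    ∑ i, μ i ^ 3 ≤ ((n : ℝ) - 2) / Real.sqrt (n * (n - 1)) * (∑ i, μ i ^ 2) ^ ((3 : ℝ) / 2) := by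
  have hn1 : (1 : ℝ) ≤ (n : ℝ) - 1 := by
    have : (2 : ℝ) ≤ n := by exact_mod_cast hn
    linarith
  set D : ℝ := (n : ℝ) * ((n : ℝ) - 1) with hDdef
  have hD : 0 < D := by positivity
  set B : ℝ := ∑ i, μ i ^ 2 with hBdef
  have hB : 0 ≤ B := Finset.sum_nonneg fun i _ => sq_nonneg _
  set s : ℝ := Real.sqrt (B / D) with hsdef
  have hs : 0 ≤ s := Real.sqrt_nonneg _
  have hs2 : s ^ 2 = B / D := Real.sq_sqrt (by positivity)
  -- Samuelson-type bound: μ i ≤ (n-1) s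
  have key : ∀ i, μ i ≤ ((n : ℝ) - 1) * s := by
    intro i
    have hcs := Finset.sum_mul_sq_le_sq_mul_sq (Finset.univ.erase i)
      (fun _ => (1 : ℝ)) μ
    have herase : ∑ j ∈ Finset.univ.erase i, μ j = -μ i := by
      have := Finset.add_sum_erase Finset.univ μ (Finset.mem_univ i)
      have h0 : μ i + ∑ j ∈ Finset.univ.erase i, μ j = 0 := by rw [this]; exact hsum
      linarith
    have herase2 : ∑ j ∈ Finset.univ.erase i, μ j ^ 2 = B - μ i ^ 2 := by
      have := Finset.add_sum_erase Finset.univ (fun j => μ j ^ 2) (Finset.mem_univ i)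
      have h0 : μ i ^ 2 + ∑ j ∈ Finset.univ.erase i, μ j ^ 2 = B := this
      linarith
    have hcard : ∑ j ∈ Finset.univ.erase i, (1 : ℝ) ^ 2 = (n : ℝ) - 1 := by
      simp [Finset.card_erase_of_mem]
      have : 1 ≤ n := le_trans (by norm_num) hn
      push_cast [Nat.cast_sub this]
      ring_nf
    simp only [one_mul] at hcs
    rw [herase, herase2, hcard, neg_sq] at hcs
    -- hcs : μ i ^ 2 ≤ (n - 1) * (B - μ i ^ 2)
    have hsq : μ i ^ 2 ≤ (((n : ℝ) - 1) * s) ^ 2 := by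
      have hn0 : (0 : ℝ) < n := by positivity
      have : (((n : ℝ) - 1) * s) ^ 2 = ((n : ℝ) - 1) * B / n := by
        rw [mul_pow, hs2, hDdef]
        field_simp
      rw [this, le_div_iff₀ hn0]
      nlinarith
    calc μ i ≤ |μ i| := le_abs_self _
      _ = Real.sqrt (μ i ^ 2) := (Real.sqrt_sq_eq_abs _).symm
      _ ≤ Real.sqrt ((((n : ℝ) - 1) * s) ^ 2) := Real.sqrt_le_sqrt hsq
      _ = ((n : ℝ) - 1) * s := Real.sqrt_sq (by positivity)
  -- pointwise cubic bound
  have ptwise : ∀ i, μ i ^ 3 ≤ ((n : ℝ) - 3) * s * μ i ^ 2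
      + (2 * (n : ℝ) - 3) * s ^ 2 * μ i + ((n : ℝ) - 1) * s ^ 3 := by
    intro i
    nlinarith [sq_nonneg (μ i + s), key i, sq_nonneg (μ i - s)]
  have hsum3 : ∑ i, μ i ^ 3 ≤ ((n : ℝ) - 3) * s * B + (n : ℝ) * (((n : ℝ) - 1) * s ^ 3) := by
    calc ∑ i, μ i ^ 3
        ≤ ∑ i, (((n : ℝ) - 3) * s * μ i ^ 2
            + (2 * (n : ℝ) - 3) * s ^ 2 * μ i + ((n : ℝ) - 1) * s ^ 3) :=
          Finset.sum_le_sum fun i _ => ptwise i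
      _ = ((n : ℝ) - 3) * s * B + (2 * (n : ℝ) - 3) * s ^ 2 * (∑ i, μ i)
            + (n : ℝ) * (((n : ℝ) - 1) * s ^ 3) := by
          simp [Finset.sum_add_distrib, ← Finset.mul_sum, Finset.card_univ]
          exact Or.inl hBdef.symm
      _ = _ := by rw [hsum]; ring
  have hDs : D * s ^ 2 = B := by
    rw [hs2]; field_simp
  have hfinal : ((n : ℝ) - 3) * s * B + (n : ℝ) * (((n : ℝ) - 1) * s ^ 3)
      = ((n : ℝ) - 2) * B * s := by
    have : (n : ℝ) * (((n : ℝ) - 1) * s ^ 3) = D * s ^ 2 * s := by rw [hDdef]; ring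
    rw [this, hDs]; ring
  rw [hfinal] at hsum3
  -- rewrite RHS
  have hrpow : B ^ ((3 : ℝ) / 2) = B * Real.sqrt B := by
    have h1 : B ^ ((3 : ℝ) / 2) = (Real.sqrt B) ^ (3 : ℕ) := by
      rw [Real.sqrt_eq_rpow, ← Real.rpow_natCast (B ^ (1 / (2:ℝ))) 3, ← Real.rpow_mul hB]
      norm_num
    rw [h1]
    have h2 : Real.sqrt B ^ 2 = B := Real.sq_sqrt hB
    nlinarith [Real.sqrt_nonneg B]
  rw [hrpow]
  have hsd : s = Real.sqrt B / Real.sqrt D := by rw [hsdef, Real.sqrt_div hB]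
  calc ∑ i, μ i ^ 3 ≤ ((n : ℝ) - 2) * B * s := hsum3
    _ = ((n : ℝ) - 2) / Real.sqrt ((n:ℝ) * ((n:ℝ) - 1)) * (B * Real.sqrt B) := by
        rw [hsd, ← hDdef]; ring

theorem stmt_0 (n : ℕ) (hn : 2 ≤ n) (μ : Fin n → ℝ) (hsum : ∑ i, μ i = 0) :
    |∑ i, μ i ^ 3| ≤ ((n : ℝ) - 2) / Real.sqrt (n * (n - 1)) * (∑ i, μ i ^ 2) ^ ((3 : ℝ) / 2) := by
  have h1 := aux_cube_bound n hn μ hsum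
  have h2 := aux_cube_bound n hn (fun i => -μ i) (by simp [hsum])
  have e3 : ∑ i, (-μ i) ^ 3 = -∑ i, μ i ^ 3 := by
    rw [← Finset.sum_neg_distrib]
    exact Finset.sum_congr rfl fun i _ => by ring
  have e2 : ∑ i, (-μ i) ^ 2 = ∑ i, μ i ^ 2 :=
    Finset.sum_congr rfl fun i _ => by ring
  rw [e3, e2] at h2
  rw [abs_le]
  constructor
  · linarith
  · exact h1
end

section
/- For real numbers μ_1, ..., μ_n (n ≥ 3) with ∑ μ_i = 0, equality |∑ μ_i³| = ((n-2)/√(n(n-1))) · (∑ μ_i²)^{3/2} holds if and only if at least n-1 of the μ_i are equal to each other. -/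
theorem three_halves_aux (x : ℝ) (hx : 0 ≤ x) : x ^ ((3:ℝ)/2) = x * Real.sqrt x := by
  rw [Real.sqrt_eq_rpow, show (3:ℝ)/2 = 1 + 1/2 by norm_num,
    Real.rpow_add' hx (by norm_num), Real.rpow_one]

theorem key_aux (n : ℕ) (hn : 3 ≤ n) (μ : Fin n → ℝ) (hsum : ∑ i, μ i = 0)
    (hs : 0 < ∑ i, μ i ^ 2)
    (heq : ∑ i, μ i ^ 3 =
      ((n : ℝ) - 2) * Real.sqrt ((∑ i, μ i ^ 2) / ((n : ℝ) * ((n : ℝ) - 1))) * (∑ i, μ i ^ 2)) :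
    ∃ j : Fin n, ∀ i, i ≠ j →
      μ i = - Real.sqrt ((∑ i, μ i ^ 2) / ((n : ℝ) * ((n : ℝ) - 1))) := by
  have hn3 : (3:ℝ) ≤ (n:ℝ) := by exact_mod_cast hn
  set s : ℝ := ∑ i, μ i ^ 2 with hsdef
  set C : ℝ := Real.sqrt (s / ((n:ℝ) * ((n:ℝ) - 1))) with hCdef
  have hXpos : 0 < (n:ℝ) * ((n:ℝ) - 1) := by nlinarith
  have hCpos : 0 < C := Real.sqrt_pos.mpr (by positivity)
  have hC2 : (n:ℝ) * ((n:ℝ) - 1) * C ^ 2 = s := by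
    rw [hCdef, Real.sq_sqrt (by positivity)]
    field_simp
    exact div_self (ne_of_gt (by linarith))
  set B : ℝ := ((n:ℝ) - 1) * C with hBdef
  have hBpos : 0 < B := by rw [hBdef]; nlinarith
  -- each μ i ≤ B
  have hB : ∀ i, μ i ≤ B := by
    intro i
    have hsum' : ∑ k ∈ ({i}ᶜ : Finset (Fin n)), μ k = - μ i := by
      have h1 : μ i + ∑ k ∈ ({i}ᶜ : Finset (Fin n)), μ k = 0 := by
        rw [← hsum, Fintype.sum_eq_add_sum_compl i μ]
      linarith
    have hsq' : ∑ k ∈ ({i}ᶜ : Finset (Fin n)), μ k ^ 2 = s - μ i ^ 2 := by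
      have h1 : μ i ^ 2 + ∑ k ∈ ({i}ᶜ : Finset (Fin n)), μ k ^ 2 = s := by
        rw [hsdef, Fintype.sum_eq_add_sum_compl i]
      linarith
    have hcard : (({i}ᶜ : Finset (Fin n)).card : ℝ) = (n:ℝ) - 1 := by
      rw [Finset.card_compl, Finset.card_singleton, Fintype.card_fin]
      have : (1:ℕ) ≤ n := by omega
      push_cast [Nat.cast_sub this]
      ring
    have hcs := sq_sum_le_card_mul_sum_sq (s := ({i}ᶜ : Finset (Fin n))) (f := μ)
    rw [hsum', hsq'] at hcs
    have hcs' : μ i ^ 2 ≤ ((n:ℝ) - 1) * (s - μ i ^ 2) := by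
      calc μ i ^ 2 = (-μ i) ^ 2 := by ring
        _ ≤ (({i}ᶜ : Finset (Fin n)).card : ℝ) * (s - μ i ^ 2) := hcs
        _ = ((n:ℝ) - 1) * (s - μ i ^ 2) := by rw [hcard]
    have hsqB : μ i ^ 2 ≤ B ^ 2 := by
      rw [hBdef]
      nlinarith [hC2]
    have h1 : |μ i| ≤ B := by
      rw [← Real.sqrt_sq hBpos.le, ← Real.sqrt_sq_eq_abs]
      exact Real.sqrt_le_sqrt hsqB
    linarith [le_abs_self (μ i)]
  -- identity
  have hid : ∑ i, (μ i - B) * (μ i + C)^2 = ∑ i, μ i ^ 3 - ((n:ℝ) - 2) * C * s := by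
    have expand : ∀ i ∈ Finset.univ, (μ i - B) * (μ i + C)^2 =
        μ i ^ 3 + (2*C - B) * μ i ^ 2 + ((C^2 - 2*B*C) * μ i + (-(B*C^2))) := fun i _ => by ring
    rw [Finset.sum_congr rfl expand, Finset.sum_add_distrib, Finset.sum_add_distrib,
      Finset.sum_add_distrib, ← Finset.mul_sum, ← Finset.mul_sum, Finset.sum_const,
      Finset.card_univ, Fintype.card_fin, hsum, ← hsdef, nsmul_eq_mul, hBdef]
    rw [hBdef] at *
    linear_combination (-C) * hC2
  have hzero : ∑ i, (μ i - B) * (μ i + C)^2 = 0 := by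
    rw [hid, heq]; ring
  have hnonpos : ∀ i ∈ Finset.univ, (μ i - B) * (μ i + C)^2 ≤ 0 := by
    intro i _
    nlinarith [hB i, sq_nonneg (μ i + C)]
  have hall : ∀ i, μ i = B ∨ μ i = -C := by
    intro i
    have h0 := (Finset.sum_eq_zero_iff_of_nonpos hnonpos).mp hzero i (Finset.mem_univ i)
    rcases mul_eq_zero.mp h0 with h | h
    · left; linarith
    · right; have := sq_eq_zero_iff.mp h; linarith
  have hexists : ∃ j, μ j = B := by
    by_contra hc
    push_neg at hc
    have hall' : ∀ i, μ i = -C := fun i => (hall i).resolve_left (hc i)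
    have h1 : ∑ i, μ i = (n:ℝ) * (-C) := by
      rw [Finset.sum_congr rfl (fun i _ => hall' i), Finset.sum_const, Finset.card_univ,
        Fintype.card_fin, nsmul_eq_mul]
    rw [hsum] at h1
    nlinarith
  obtain ⟨j, hj⟩ := hexists
  refine ⟨j, fun i hij => ?_⟩
  rcases hall i with h | h
  · exfalso
    have hge : ∑ k ∈ ({i, j} : Finset (Fin n)), (μ k + C) ≤ ∑ k, (μ k + C) := by
      apply Finset.sum_le_sum_of_subset_of_nonneg (Finset.subset_univ _)
      intro k _ _
      rcases hall k with h' | h'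
      · rw [h']; nlinarith
      · rw [h']; simp
    rw [Finset.sum_pair hij] at hge
    have hsumC : ∑ k, (μ k + C) = (n:ℝ) * C := by
      rw [Finset.sum_add_distrib, hsum, Finset.sum_const, Finset.card_univ, Fintype.card_fin,
        nsmul_eq_mul]
      ring
    rw [h, hj, hsumC, hBdef] at hge
    nlinarith
  · exact h

theorem stmt_1 (n : ℕ) (hn : 3 ≤ n) (μ : Fin n → ℝ) (hsum : ∑ i, μ i = 0) :
    |∑ i, μ i ^ 3| = ((n : ℝ) - 2) / Real.sqrt (n * (n - 1)) * (∑ i, μ i ^ 2) ^ ((3 : ℝ) / 2) ↔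
      ∃ j : Fin n, ∀ i, i ≠ j → ∀ k, k ≠ j → μ i = μ k := by
  have hn3 : (3:ℝ) ≤ (n:ℝ) := by exact_mod_cast hn
  have hX : (0:ℝ) < (n:ℝ) * ((n:ℝ) - 1) := by nlinarith
  have hs0 : (0:ℝ) ≤ ∑ i, μ i ^ 2 := Finset.sum_nonneg fun i _ => sq_nonneg _
  constructor
  · intro h
    rcases eq_or_lt_of_le hs0 with hs | hs
    · -- all zero
      have hz : ∀ i, μ i = 0 := by
        intro i
        have h0 := (Finset.sum_eq_zero_iff_of_nonneg
          (fun i _ => sq_nonneg (μ i))).mp hs.symm i (Finset.mem_univ i)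
        exact sq_eq_zero_iff.mp h0
      exact ⟨⟨0, by omega⟩, fun i _ k _ => by rw [hz i, hz k]⟩
    · have hrw : ((n:ℝ) - 2) / Real.sqrt ((n:ℝ) * ((n:ℝ) - 1)) * (∑ i, μ i ^ 2) ^ ((3:ℝ)/2)
          = ((n:ℝ) - 2) * Real.sqrt ((∑ i, μ i ^ 2) / ((n:ℝ) * ((n:ℝ) - 1))) * (∑ i, μ i ^ 2) := by
        rw [three_halves_aux _ hs.le, Real.sqrt_div hs0]
        ring
      rw [hrw] at h
      have hR : 0 ≤ ((n:ℝ) - 2) * Real.sqrt ((∑ i, μ i ^ 2) / ((n:ℝ) * ((n:ℝ) - 1)))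
          * (∑ i, μ i ^ 2) :=
        mul_nonneg (mul_nonneg (by linarith) (Real.sqrt_nonneg _)) hs.le
      rcases (abs_eq hR).mp h with hc | hc
      · obtain ⟨j, hj⟩ := key_aux n hn μ hsum hs hc
        exact ⟨j, fun i hi k hk => by rw [hj i hi, hj k hk]⟩
      · have h1 : ∑ i, (-μ) i = 0 := by
          simp only [Pi.neg_apply, Finset.sum_neg_distrib, hsum, neg_zero]
        have h2 : ∑ i, (-μ) i ^ 2 = ∑ i, μ i ^ 2 := by
          apply Finset.sum_congr rfl; intros; simp [Pi.neg_apply]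
        have h3 : ∑ i, (-μ) i ^ 3 = -∑ i, μ i ^ 3 := by
          rw [← Finset.sum_neg_distrib]
          apply Finset.sum_congr rfl; intros; simp only [Pi.neg_apply]; ring
        have hs' : 0 < ∑ i, (-μ) i ^ 2 := by rw [h2]; exact hs
        have heq' : ∑ i, (-μ) i ^ 3 =
            ((n:ℝ) - 2) * Real.sqrt ((∑ i, (-μ) i ^ 2) / ((n:ℝ) * ((n:ℝ) - 1)))
            * (∑ i, (-μ) i ^ 2) := by
          rw [h3, h2, hc]; ring
        obtain ⟨j, hj⟩ := key_aux n hn (-μ) h1 hs' heq'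
        refine ⟨j, fun i hi k hk => ?_⟩
        have e1 := hj i hi
        have e2 := hj k hk
        simp only [Pi.neg_apply] at e1 e2
        linarith
  · rintro ⟨j, hj⟩
    have hnt : Nontrivial (Fin n) := Fin.nontrivial_iff_two_le.mpr (by omega)
    obtain ⟨i0, hi0⟩ := exists_ne j
    set a := μ i0 with hadef
    have ha : ∀ i, i ≠ j → μ i = a := fun i hi => hj i hi i0 hi0
    have hcard : ((Finset.univ.erase j).card : ℝ) = (n:ℝ) - 1 := by
      rw [Finset.card_erase_of_mem (Finset.mem_univ j), Finset.card_univ, Fintype.card_fin]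
      have : (1:ℕ) ≤ n := by omega
      push_cast [Nat.cast_sub this]
      ring
    have hsum1 : ∀ m : ℕ, ∑ i, μ i ^ m = μ j ^ m + ((n:ℝ) - 1) * a ^ m := by
      intro m
      rw [← Finset.add_sum_erase _ _ (Finset.mem_univ j)]
      congr 1
      rw [Finset.sum_congr rfl (fun i hi => by rw [ha i (Finset.ne_of_mem_erase hi)]),
        Finset.sum_const, nsmul_eq_mul, hcard]
    have hsum1' : ∑ i, μ i = μ j + ((n:ℝ) - 1) * a := by
      have := hsum1 1
      simpa using this
    have hμj : μ j = -((n:ℝ) - 1) * a := by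
      rw [hsum1'] at hsum; linarith
    have hs2 : ∑ i, μ i ^ 2 = (n:ℝ) * ((n:ℝ) - 1) * a ^ 2 := by
      rw [hsum1 2, hμj]; ring
    have hs3 : ∑ i, μ i ^ 3 = -((n:ℝ) * ((n:ℝ) - 1) * ((n:ℝ) - 2)) * a ^ 3 := by
      rw [hsum1 3, hμj]; ring
    rw [hs2, hs3, three_halves_aux _ (by positivity)]
    have hsq : Real.sqrt ((n:ℝ) * ((n:ℝ) - 1) * a ^ 2)
        = Real.sqrt ((n:ℝ) * ((n:ℝ) - 1)) * |a| := by
      rw [Real.sqrt_mul hX.le, Real.sqrt_sq_eq_abs]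
    rw [hsq]
    have hsX : 0 < Real.sqrt ((n:ℝ) * ((n:ℝ) - 1)) := Real.sqrt_pos.mpr hX
    have habs : |(-((n:ℝ) * ((n:ℝ) - 1) * ((n:ℝ) - 2))) * a ^ 3|
        = (n:ℝ) * ((n:ℝ) - 1) * ((n:ℝ) - 2) * (a ^ 2 * |a|) := by
      rw [abs_mul, abs_neg,
        abs_of_nonneg (by nlinarith : (0:ℝ) ≤ (n:ℝ) * ((n:ℝ) - 1) * ((n:ℝ) - 2)),
        abs_pow]
      rw [show |a| ^ 3 = |a| ^ 2 * |a| by ring, sq_abs]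
    rw [habs, div_mul_eq_mul_div, eq_div_iff hsX.ne']
    ring
end

section
/- For n ≥ 2 and 1/n ≤ r² < 1, with H defined by nH = (nr²-1)/(r√(1-r²)) and S = (1-2r²+nr⁴)/(r²(1-r²)), the identity -S - n = -n(1+H²) - (n/(4(n-1)))·(√(4(n-1)+n²H²) - (n-2)|H|)² holds. -/
theorem stmt_4 (n : ℕ) (hn : 2 ≤ n) (r H S : ℝ)
    (hr : 1 / (n : ℝ) ≤ r ^ 2) (hr1 : r ^ 2 < 1)
    (hH : (n : ℝ) * H = ((n : ℝ) * r ^ 2 - 1) / (r * Real.sqrt (1 - r ^ 2)))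
    (hS : S = (1 - 2 * r ^ 2 + (n : ℝ) * r ^ 4) / (r ^ 2 * (1 - r ^ 2))) :
    -S - n = -(n : ℝ) * (1 + H ^ 2) -
      ((n : ℝ) / (4 * ((n : ℝ) - 1))) *
        (Real.sqrt (4 * ((n : ℝ) - 1) + n ^ 2 * H ^ 2) - ((n : ℝ) - 2) * |H|) ^ 2 := by
  have hn2 : (2:ℝ) ≤ (n:ℝ) := by exact_mod_cast hn
  have hn0 : (0:ℝ) < (n:ℝ) := by linarith
  have hnr : (1:ℝ) ≤ (n:ℝ) * r ^ 2 := by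
    rw [div_le_iff₀ hn0] at hr; linarith
  have hr0 : (0:ℝ) < r ^ 2 := by nlinarith
  have hrne : r ≠ 0 := by
    intro h; rw [h] at hr0; simp at hr0
  set s := Real.sqrt (1 - r ^ 2) with hs
  have hs2 : s ^ 2 = 1 - r ^ 2 := Real.sq_sqrt (by linarith)
  have hspos : (0:ℝ) < s := Real.sqrt_pos.mpr (by linarith)
  have harpos : (0:ℝ) < |r| := abs_pos.mpr hrne
  have hra : |r| ^ 2 = r ^ 2 := sq_abs r
  have h1r : (1:ℝ) - r ^ 2 ≠ 0 := by linarith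
  have hnne : (n:ℝ) ≠ 0 := ne_of_gt hn0
  have hH' : H = ((n:ℝ) * r ^ 2 - 1) / ((n:ℝ) * (r * s)) := by
    rw [eq_div_iff (by positivity)]
    field_simp at hH
    nlinarith [hH]
  have habsH : |H| = ((n:ℝ) * r ^ 2 - 1) / ((n:ℝ) * (|r| * s)) := by
    rw [hH', abs_div]
    congr 1
    · exact abs_of_nonneg (by linarith)
    · rw [abs_mul, abs_mul, abs_of_pos hn0, abs_of_pos hspos]
  have key : Real.sqrt (4 * ((n:ℝ) - 1) + (n:ℝ) ^ 2 * H ^ 2)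
      = (((n:ℝ) - 2) * r ^ 2 + 1) / (|r| * s) := by
    have harg : 4 * ((n:ℝ) - 1) + (n:ℝ) ^ 2 * H ^ 2
        = ((((n:ℝ) - 2) * r ^ 2 + 1) / (|r| * s)) ^ 2 := by
      rw [hH', div_pow, div_pow, mul_pow, mul_pow, mul_pow, hra, hs2]
      field_simp [hrne, h1r, hnne]
      ring
    rw [harg, Real.sqrt_sq (div_nonneg (by nlinarith) (by positivity))]
  have hdiff : (((n:ℝ) - 2) * r ^ 2 + 1) / (|r| * s) - ((n:ℝ) - 2) * |H|
      = (2 * ((n:ℝ) - 1)) / ((n:ℝ) * (|r| * s)) := by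
    rw [habsH]
    field_simp
    ring
  have hH2 : H ^ 2 = ((n:ℝ) * r ^ 2 - 1) ^ 2 / ((n:ℝ) ^ 2 * (r ^ 2 * (1 - r ^ 2))) := by
    rw [hH', div_pow, mul_pow, mul_pow, hs2]
  have hdsq : ((2 * ((n:ℝ) - 1)) / ((n:ℝ) * (|r| * s))) ^ 2
      = (2 * ((n:ℝ) - 1)) ^ 2 / ((n:ℝ) ^ 2 * (r ^ 2 * (1 - r ^ 2))) := by
    rw [div_pow, mul_pow, mul_pow, mul_pow, hra, hs2]
  have hn1 : (n:ℝ) - 1 ≠ 0 := by intro h; linarith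
  rw [hS, key, hdiff, hdsq, hH2]
  field_simp
  ring
end
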